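/- Let A be a cocomplete additive category, M ∈ A an object, and B = T_M-Mod the related abelian category. If the class of all projective objects in B is closed under arbitrary (resp. countable) direct limits, then the class of objects Add(M) ⊆ A is closed under arbitrary (resp. countable) direct limits in A. More specifically, if every countable direct limit of copies of the projective generator P = T_M(*) is projective in B, then every countable direct limit of copies of M in A belongs to Add(M). -/

import Mathlib

open CategoryTheory Limits Opposite

universe v u

namespace EnochsPaper

attribute [local instance] Limits.hasSmallestColimitsOfHasColimits

variable {A : Type u} [Category.{v} A]

/-- `l : X ⟶ C` is an `L`-precover of `C`. -/
def IsPrecover (L : A → Prop) {X C : A} (l : X ⟶ C) : Prop :=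
  L X ∧ ∀ (X' : A), L X' → ∀ l' : X' ⟶ C, ∃ f : X' ⟶ X, f ≫ l = l'

/-- `l : X ⟶ C` is an `L`-cover. -/
def IsCover (L : A → Prop) {X C : A} (l : X ⟶ C) : Prop :=
  IsPrecover L l ∧ ∀ e : X ⟶ X, e ≫ l = l → IsIso e

/-- The object `C` admits an `L`-cover. -/
def HasCover (L : A → Prop) (C : A) : Prop :=
  ∃ (X : A) (l : X ⟶ C), IsCover L l

/-- The class `L` is covering: every object has an `L`-cover. -/
def Covering (L : A → Prop) : Prop := ∀ C : A, HasCover L C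

/-- The class `L` is closed under direct limits (colimits of diagrams indexed by
nonempty directed posets). -/
def ClosedUnderDirectLimits (L : A → Prop) : Prop :=
  ∀ (Θ : Type v) (_ : PartialOrder Θ), IsDirected Θ (· ≤ ·) → Nonempty Θ →
    ∀ (D : Θ ⥤ A) (c : Cocone D), IsColimit c → (∀ θ : Θ, L (D.obj θ)) → L c.pt

/-- The class `L` is closed under countable direct limits. -/
def ClosedUnderCountableDirectLimits (L : A → Prop) : Prop :=
  ∀ (Θ : Type v) (_ : PartialOrder Θ), Countable Θ → IsDirected Θ (· ≤ ·) → Nonempty Θ →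
    ∀ (D : Θ ⥤ A) (c : Cocone D), IsColimit c → (∀ θ : Θ, L (D.obj θ)) → L c.pt

variable [HasColimits A]

/-- The copower functor `X ↦ M^{(X)}`, sending a set to the coproduct of that many
copies of `M`. -/
@[simps]
noncomputable def copower (M : A) : Type v ⥤ A where
  obj X := ∐ (fun _ : X => M)
  map {X Y} f := Sigma.desc (fun x => Sigma.ι (fun _ : Y => M) (f x))

/-- The adjunction `M^{(-)} ⊣ Hom_A(M, -)`. -/
noncomputable def copowerAdj (M : A) : copower M ⊣ coyoneda.obj (op M) :=
  Adjunction.mkOfHomEquiv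
    { homEquiv := fun X N =>
        { toFun := fun g => TypeCat.ofHom fun x => Sigma.ι (fun _ : X => M) x ≫ g
          invFun := fun h => Sigma.desc h
          left_inv := fun g => by dsimp only [copower]; ext x; simp
          right_inv := fun h => by ext x; simp }
      homEquiv_naturality_left_symm := by
        intro X X' N f g
        dsimp only [copower]
        ext x
        show Sigma.ι (fun _ : X => M) x ≫ Sigma.desc (fun y => (f ≫ g) y) =
          Sigma.ι (fun _ : X => M) x ≫ Sigma.desc (fun y => Sigma.ι (fun _ : X' => M) (f y)) ≫
            Sigma.desc (fun y => g y)
        simp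
      homEquiv_naturality_right := by
        intro X N N' g f
        ext x
        exact (Category.assoc _ _ _).symm }

/-- The monad `T_M : X ↦ Hom_A(M, M^{(X)})` on the category of sets, induced by the
adjunction `M^{(-)} ⊣ Hom_A(M, -)`. -/
noncomputable def TM (M : A) : Monad (Type v) := (copowerAdj M).toMonad

/-- The category `B = T_M-Mod` of modules (Eilenberg–Moore algebras) over the monad
`T_M`. -/
noncomputable abbrev BCat (M : A) := (TM M).Algebra

/-- The free `T_M`-module on one generator, `P = T_M(*)`; it is a projective generator
of `B = T_M-Mod`. -/
noncomputable def PGen (M : A) : BCat M := (TM M).free.obj PUnit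

/-- The functor `Ψ_M : A ⥤ B`, `N ↦ Hom_A(M, N)` with its natural `T_M`-module structure:
the comparison functor of the adjunction. -/
noncomputable def PsiM (M : A) : A ⥤ BCat M := Monad.comparison (copowerAdj M)

/-- The functor `Φ_M : B ⥤ A`, left adjoint to `Ψ_M`. -/
noncomputable def PhiM (M : A) : BCat M ⥤ A :=
  Monad.MonadicityInternal.leftAdjointComparison (copowerAdj M)

/-- The adjunction `Φ_M ⊣ Ψ_M`. -/
noncomputable def adjM (M : A) : PhiM M ⊣ PsiM M :=
  Monad.MonadicityInternal.comparisonAdjunction (copowerAdj M)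

/-- `Add(M)`: the class of direct summands of coproducts of copies of `M`. -/
def AddClass (M : A) : A → Prop := fun N =>
  ∃ (X : Type v) (s : N ⟶ ∐ (fun _ : X => M)) (r : (∐ fun _ : X => M) ⟶ N), s ≫ r = 𝟙 N

/-- The inductive system `M → M → M → ⋯` determined by a sequence of endomorphisms of
`M`; its direct limit is a "countable direct limit of copies of `M`". -/
noncomputable def seqDiagram {C : Type u_1} [Category.{u_2} C] (M : C) (f : ℕ → (M ⟶ M)) :
    ℕ ⥤ C :=
  Functor.ofSequence (X := fun _ => M) f

variable [Preadditive A]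

/-- The telescope map `id − shift : ∐_{n} M ⟶ ∐_{n} M` associated with a sequence of
endomorphisms `f n : M ⟶ M`; its component on the `n`-th summand is
`ι_n − f_n ≫ ι_{n+1}`. -/
noncomputable def telescopeMap (M : A) (f : ℕ → (M ⟶ M)) :
    (∐ fun _ : ℕ => M) ⟶ (∐ fun _ : ℕ => M) :=
  Sigma.desc fun n =>
    Sigma.ι (fun _ : ℕ => M) n - (f n ≫ Sigma.ι (fun _ : ℕ => M) (n + 1))

/-- The canonical morphism `∐_{n} M ⟶ colim_n M` to (the point of a cocone computing)
the direct limit of the inductive system. -/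
noncomputable def telescopeProj (M : A) (f : ℕ → (M ⟶ M)) (c : Cocone (seqDiagram M f)) :
    (∐ fun _ : ℕ => M) ⟶ c.pt :=
  Sigma.desc fun n => c.ι.app n

/-- The telescope Hom exactness condition (THEC): for every sequence of endomorphisms of
`M`, the right exact telescope sequence `∐ M → ∐ M → colim M → 0` stays right exact after
applying `Hom_A(M, −)`: every morphism `M ⟶ colim M` lifts to `∐ M`, and every morphism
`M ⟶ ∐ M` killed by the projection factors through the telescope map `id − shift`. -/
def THEC (M : A) : Prop :=
  ∀ (f : ℕ → (M ⟶ M)) (c : Cocone (seqDiagram M f)), IsColimit c →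
    (∀ h : M ⟶ c.pt, ∃ g : M ⟶ ∐ fun _ : ℕ => M, g ≫ telescopeProj M f c = h) ∧
    (∀ g : M ⟶ ∐ fun _ : ℕ => M, g ≫ telescopeProj M f c = 0 →
      ∃ e : M ⟶ ∐ fun _ : ℕ => M, e ≫ telescopeMap M f = g)



section Machinery

set_option linter.unusedSectionVars false

variable (M : A)

/-- Abbreviation for the copower object. -/
noncomputable abbrev cp (X : Type v) : A := ∐ (fun _ : X => M)

/-- Coprojection. -/
noncomputable abbrev ci {X : Type v} (x : X) : M ⟶ cp M X := Sigma.ι (fun _ : X => M) x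

/-- Descent morphism. -/
noncomputable abbrev cd {X : Type v} {N : A} (g : X → (M ⟶ N)) : cp M X ⟶ N := Sigma.desc g

@[simp] lemma ci_cd {X : Type v} {N : A} (g : X → (M ⟶ N)) (x : X) :
    ci M x ≫ cd M g = g x := by simp

lemma cd_comp {X : Type v} {N N' : A} (g : X → (M ⟶ N)) (k : N ⟶ N') :
    cd M g ≫ k = cd M (fun x => g x ≫ k) := by
  apply Sigma.hom_ext; intro x; simp

lemma cd_ci {X : Type v} : cd M (fun x => ci M x) = 𝟙 (cp M X) := by
  apply Sigma.hom_ext; intro x; simp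

lemma TM_obj (X : Type v) : (TM M).obj X = (M ⟶ cp M X) := rfl

lemma TM_map {X Y : Type v} (g : X ⟶ Y) (t : M ⟶ cp M X) :
    (TM M).map g t = t ≫ cd M (fun x => ci M (g x)) := rfl

lemma TM_η {X : Type v} (x : X) : (TM M).η.app X x = ci M x := by
  simp only [TM, Adjunction.toMonad, copowerAdj, Adjunction.mkOfHomEquiv_unit_app,
    Equiv.coe_fn_mk]
  exact Category.comp_id _

lemma TM_μ {X : Type v} (t : M ⟶ cp M (M ⟶ cp M X)) :
    (TM M).μ.app X t = t ≫ cd M (fun ψ : M ⟶ cp M X => ψ) := by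
  simp only [TM, Adjunction.toMonad, copowerAdj]
  simp [Adjunction.mkOfHomEquiv_counit_app]
  rfl

section Alg

variable {M}

lemma alg_unit (b : BCat M) (x : b.A) : b.a ((ci M x : M ⟶ cp M b.A)) = x := by
  have h := types_congr_hom b.unit x
  change b.a ((TM M).η.app b.A x) = x at h
  rwa [TM_η] at h

lemma alg_assoc (b : BCat M) (Φ : M ⟶ cp M (M ⟶ cp M b.A)) :
    b.a ((Φ ≫ cd M (fun ψ : M ⟶ cp M b.A => ci M (b.a ψ)) : M ⟶ cp M b.A)) =
      b.a ((Φ ≫ cd M (fun ψ : M ⟶ cp M b.A => ψ) : M ⟶ cp M b.A)) := by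
  have h := types_congr_hom b.assoc Φ
  change b.a ((TM M).μ.app b.A Φ) = b.a ((TM M).map b.a Φ) at h
  rw [TM_μ M Φ, TM_map M b.a Φ] at h
  exact h.symm

/-- Replace each entry of a family by (the coprojection of) its value under the algebra
structure map. -/
lemma rep (b : BCat M) {X : Type v} (t : M ⟶ cp M X) (d : X → (M ⟶ cp M b.A)) :
    b.a ((t ≫ cd M d : M ⟶ cp M b.A)) = b.a ((t ≫ cd M (fun x => ci M (b.a (d x))) : M ⟶ cp M b.A)) := by
  have h := alg_assoc b (t ≫ cd M (fun x => ci M (d x)))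
  simp only [Category.assoc, cd_comp, ci_cd] at h
  exact h.symm

lemma hom_app {b b' : BCat M} (h : b ⟶ b') (t : M ⟶ cp M b.A) :
    h.f (b.a t) = b'.a ((t ≫ cd M (fun x => ci M (h.f x)) : M ⟶ cp M b'.A)) := by
  have w := types_congr_hom h.h t
  change b'.a ((TM M).map h.f t) = h.f (b.a t) at w
  rw [TM_map] at w
  exact w.symm

end Alg

end Machinery

section Machinery2

set_option linter.unusedSectionVars false

variable {A : Type u} [Category.{v} A] [HasColimits A] [Preadditive A] {M : A}

lemma cd_sub {X : Type v} {N : A} (g h : X → (M ⟶ N)) :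
    cd M g - cd M h = cd M (fun x => g x - h x) := by
  apply Sigma.hom_ext; intro x
  simp [Preadditive.comp_sub]

lemma cd_zero {X : Type v} {N : A} : cd M (fun _ : X => (0 : M ⟶ N)) = 0 := by
  apply Sigma.hom_ext; intro x; simp

section Ops

variable (b : BCat M)

lemma a_sub2 (f g : M ⟶ cp M b.A) :
    b.a ((ci M (b.a f) - ci M (b.a g) : M ⟶ cp M b.A)) = b.a ((f - g : M ⟶ cp M b.A)) := by
  have h := rep b (t := ci M (ULift.up true) - ci M (ULift.up false))
      (d := fun x : ULift.{v} Bool => if x.down then f else g)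
  simp only [Preadditive.sub_comp, ci_cd, if_true, if_false] at h
  exact h.symm

lemma a_add2 (f g : M ⟶ cp M b.A) :
    b.a ((ci M (b.a f) + ci M (b.a g) : M ⟶ cp M b.A)) = b.a ((f + g : M ⟶ cp M b.A)) := by
  have h := rep b (t := ci M (ULift.up true) + ci M (ULift.up false))
      (d := fun x : ULift.{v} Bool => if x.down then f else g)
  simp only [Preadditive.add_comp, ci_cd, if_true, if_false] at h
  exact h.symm

lemma a_neg1 (f : M ⟶ cp M b.A) :
    b.a ((-ci M (b.a f) : M ⟶ cp M b.A)) = b.a ((-f : M ⟶ cp M b.A)) := by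
  have h := rep b (t := -ci M PUnit.unit) (d := fun _ : PUnit.{v+1} => f)
  simp only [Preadditive.neg_comp, ci_cd] at h
  exact h.symm

lemma a_zero_fam {X : Type v} (t : M ⟶ cp M X) :
    b.a ((t ≫ cd M (fun _ : X => ci M (b.a (0 : M ⟶ cp M b.A))) : M ⟶ cp M b.A)) = b.a (0 : M ⟶ cp M b.A) := by
  have h := rep b (t := t) (d := fun _ : X => (0 : M ⟶ cp M b.A))
  rw [cd_zero, Limits.comp_zero] at h
  exact h.symm

/-- A subset of (the carrier of) an algebra closed under all operations. -/
def Clos (S : Set b.A) : Prop :=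
  ∀ (X : Type v) (t : M ⟶ cp M X) (v : X → b.A), (∀ x, v x ∈ S) →
    b.a ((t ≫ cd M (fun x => ci M (v x)) : M ⟶ cp M b.A)) ∈ S

variable {b}

lemma Clos.zero_mem {S : Set b.A} (hS : Clos b S) : b.a (0 : M ⟶ cp M b.A) ∈ S := by
  have h := hS PEmpty.{v+1} (0 : M ⟶ cp M PEmpty.{v+1}) (fun x => x.elim) (fun x => x.elim)
  rwa [Limits.zero_comp] at h

lemma Clos.neg_mem {S : Set b.A} (hS : Clos b S) {w : b.A} (hw : w ∈ S) :
    b.a ((-ci M w : M ⟶ cp M b.A)) ∈ S := by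
  have h := hS PUnit.{v+1} (-ci M PUnit.unit) (fun _ => w) (fun _ => hw)
  rwa [Preadditive.neg_comp, ci_cd] at h

lemma Clos.add_mem {S : Set b.A} (hS : Clos b S) {w₁ w₂ : b.A}
    (h₁ : w₁ ∈ S) (h₂ : w₂ ∈ S) : b.a ((ci M w₁ + ci M w₂ : M ⟶ cp M b.A)) ∈ S := by
  have h := hS (ULift.{v} Bool) (ci M (ULift.up true) + ci M (ULift.up false))
      (fun x => if x.down then w₁ else w₂) (fun x => by split <;> assumption)
  simpa only [Preadditive.add_comp, ci_cd, if_true, Bool.false_eq_true, if_false] using h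

lemma clos_range {b z : BCat M} (e : b ⟶ z) : Clos z (Set.range e.f) := by
  intro X t v hv
  choose w hw using hv
  have hv' : (fun x => ci M (v x)) = fun x => ci M (e.f (w x)) := by
    funext x; rw [hw]
  rw [hv']
  have h : z.a ((t ≫ cd M (fun x => ci M (e.f (w x))) : M ⟶ cp M z.A))
      = e.f (b.a ((t ≫ cd M (fun x => ci M (w x)) : M ⟶ cp M b.A))) := by
    rw [hom_app e]
    rw [Category.assoc, cd_comp]
    simp only [ci_cd]
  rw [h]
  exact ⟨_, rfl⟩

end Ops

section Quot

variable {z : BCat M} {S : Set z.A} (hS : Clos z S)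

/-- The congruence associated with a closed subset. -/
def qsetoid : Setoid z.A where
  r x y := z.a ((ci M x - ci M y : M ⟶ cp M z.A)) ∈ S
  iseqv := by
    constructor
    · intro x
      show z.a _ ∈ S
      rw [sub_self]
      exact hS.zero_mem
    · intro x y h
      have h2 := hS.neg_mem h
      rwa [a_neg1, neg_sub] at h2
    · intro x y w h1 h2
      have h3 := hS.add_mem h1 h2
      rwa [a_add2, sub_add_sub_cancel] at h3

lemma qrel_iff {x y : z.A} : (qsetoid hS).r x y ↔ z.a ((ci M x - ci M y : M ⟶ cp M z.A)) ∈ S := Iff.rfl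

/-- Congruence of operations. -/
lemma qcong {X : Type v} (t : M ⟶ cp M X) (v w : X → z.A)
    (h : ∀ x, (qsetoid hS).r (v x) (w x)) :
    (qsetoid hS).r (z.a ((t ≫ cd M (fun x => ci M (v x)) : M ⟶ cp M z.A)))
      (z.a ((t ≫ cd M (fun x => ci M (w x)) : M ⟶ cp M z.A))) := by
  rw [qrel_iff, a_sub2, ← Preadditive.comp_sub, cd_sub]
  rw [rep z t (fun x => ci M (v x) - ci M (w x))]
  exact hS X t _ (fun x => h x)

/-- The quotient algebra by a closed subset. -/
noncomputable def quotAlg : BCat M where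
  A := Quotient (qsetoid hS)
  a := TypeCat.ofHom fun (t : M ⟶ cp M (Quotient (qsetoid hS))) => Quotient.mk _ (z.a ((t ≫ cd M (fun q => ci M q.out) : M ⟶ cp M z.A)))
  unit := by
    refine ConcreteCategory.hom_ext _ _ fun q => ?_
    show Quotient.mk _ (z.a ((TM M).η.app _ q ≫ _)) = q
    erw [TM_η, ci_cd, alg_unit, Quotient.out_eq]
  assoc := by
    refine ConcreteCategory.hom_ext _ _ fun (Φ : M ⟶ cp M (M ⟶ cp M (Quotient (qsetoid hS)))) => ?_
    erw [types_comp_apply, types_comp_apply, TM_μ, TM_map]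
    show Quotient.mk _ (z.a (((Φ ≫ cd M fun ψ : M ⟶ cp M (Quotient (qsetoid hS)) => ψ) ≫ cd M (fun q => ci M q.out) : M ⟶ cp M z.A))) = Quotient.mk _ (z.a (((Φ ≫ cd M fun x : M ⟶ cp M (Quotient (qsetoid hS)) => ci M (Quotient.mk (qsetoid hS) (z.a ((x ≫ cd M (fun q => ci M q.out) : M ⟶ cp M z.A))))) ≫ cd M (fun q => ci M q.out) : M ⟶ cp M z.A)))
    rw [Category.assoc, Category.assoc, cd_comp, cd_comp]
    simp only [ci_cd]
    refine Eq.trans (congrArg (Quotient.mk _)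
      (rep z Φ (fun ψ => ψ ≫ cd M (fun q => ci M q.out)))) ?_
    exact Quotient.sound (qcong hS Φ _ _
      (fun ψ => Quotient.exact (Quotient.out_eq _).symm))
  
/-- The quotient map as an algebra morphism. -/
noncomputable def quotHom : z ⟶ quotAlg hS where
  f := TypeCat.ofHom (Quotient.mk _)
  h := by
    refine ConcreteCategory.hom_ext _ _ fun (t : M ⟶ cp M z.A) => ?_
    show Quotient.mk _ (z.a (((t ≫ cd M (fun x => ci M (Quotient.mk (qsetoid hS) x))) ≫ cd M fun q => ci M q.out : M ⟶ cp M z.A))) = Quotient.mk _ (z.a t)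
    rw [Category.assoc, cd_comp]
    simp only [ci_cd]
    refine Eq.trans (Quotient.sound (qcong hS t
      (fun x => (Quotient.mk (qsetoid hS) x).out) (fun x => x)
      (fun x => Quotient.exact (Quotient.out_eq _)))) ?_
    rw [cd_ci, Category.comp_id]

lemma quotHom_f (x : z.A) : (quotHom hS).f x = Quotient.mk _ x := rfl

lemma quot_surj : Function.Surjective (quotHom hS).f :=
  fun q => ⟨q.out, q.out_eq⟩

lemma quot_rel {x y : z.A} (h : (quotHom hS).f x = (quotHom hS).f y) :
    z.a ((ci M x - ci M y : M ⟶ cp M z.A)) ∈ S := Quotient.exact h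

lemma quot_rel' {x y : z.A} (h : z.a ((ci M x - ci M y : M ⟶ cp M z.A)) ∈ S) :
    (quotHom hS).f x = (quotHom hS).f y := Quotient.sound h

section Lift
variable {V : BCat M} (k : z ⟶ V)

lemma lift_congr (hK : ∀ w ∈ S, k.f w = V.a (0 : M ⟶ cp M V.A))
    {x y : z.A} (h : (qsetoid hS).r x y) : k.f x = k.f y := by
  have h1 : k.f (z.a ((ci M x - ci M y : M ⟶ cp M z.A))) = V.a ((ci M (k.f x) - ci M (k.f y) : M ⟶ cp M V.A)) := by
    rw [hom_app k, Preadditive.sub_comp]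
    simp only [ci_cd]
  have h2 : V.a ((ci M (k.f x) - ci M (k.f y) : M ⟶ cp M V.A)) = V.a (0 : M ⟶ cp M V.A) := by
    rw [← h1]; exact hK _ h
  have e1 : k.f x = V.a ((ci M (V.a ((ci M (k.f x) - ci M (k.f y) : M ⟶ cp M V.A)))
      + ci M (V.a (ci M (k.f y))) : M ⟶ cp M V.A)) := by
    rw [a_add2, sub_add_cancel, alg_unit]
  rw [h2] at e1
  rw [e1, a_add2, zero_add, alg_unit]

/-- Lifting a morphism killing `S` through the quotient. -/
noncomputable def quotLift (hK : ∀ w ∈ S, k.f w = V.a (0 : M ⟶ cp M V.A)) :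
    quotAlg hS ⟶ V where
  f := TypeCat.ofHom <| Quotient.lift k.f (fun _ _ h => lift_congr hS k hK h)
  h := by
    refine ConcreteCategory.hom_ext _ _ fun (t : M ⟶ cp M (Quotient (qsetoid hS))) => ?_
    show V.a ((t ≫ cd M (fun x => ci M (Quotient.lift k.f (fun _ _ h => lift_congr hS k hK h) x)) : M ⟶ cp M V.A))
        = k.f (z.a (((t ≫ cd M fun q => ci M q.out) : M ⟶ cp M z.A)))
    rw [hom_app k, Category.assoc, cd_comp]
    simp only [ci_cd]
    have he : (fun x : Quotient (qsetoid hS) =>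
        ci M (Quotient.lift k.f (fun _ _ h => lift_congr hS k hK h) x))
        = fun x => ci M (k.f x.out) := by
      funext x
      conv_lhs => rw [← Quotient.out_eq x]
      rfl
    rw [he]

lemma quotHom_quotLift (hK : ∀ w ∈ S, k.f w = V.a (0 : M ⟶ cp M V.A)) :
    quotHom hS ≫ quotLift hS k hK = k := by
  apply Monad.Algebra.Hom.ext
  rfl

end Lift

end Quot

section EpiSurj

lemma hom_ext_of_surj {b c V : BCat M} {e : b ⟶ c} (he : Function.Surjective e.f)
    {u v : c ⟶ V} (w : e ≫ u = e ≫ v) : u = v := by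
  apply Monad.Algebra.Hom.ext
  refine ConcreteCategory.hom_ext _ _ fun x => ?_
  obtain ⟨y, rfl⟩ := he x
  exact types_congr_hom (congrArg Monad.Algebra.Hom.f w) y

lemma epi_of_surj {b c : BCat M} (e : b ⟶ c) (he : Function.Surjective e.f) : Epi e :=
  ⟨fun _ _ w => hom_ext_of_surj he w⟩

lemma surj_of_epi {b c : BCat M} (e : b ⟶ c) [Epi e] : Function.Surjective e.f := by
  have hS : Clos c (Set.range e.f) := clos_range e
  let z₀ : c ⟶ quotAlg hS :=
    { f := TypeCat.ofHom fun _ => Quotient.mk _ (c.a (0 : M ⟶ cp M c.A))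
      h := by
        refine ConcreteCategory.hom_ext _ _ fun (t : M ⟶ cp M c.A) => ?_
        show Quotient.mk _ (c.a (((t ≫ cd M (fun _ => ci M (Quotient.mk (qsetoid hS) (c.a (0 : M ⟶ cp M c.A))))) ≫ cd M fun q => ci M q.out : M ⟶ cp M c.A))) = Quotient.mk _ (c.a (0 : M ⟶ cp M c.A))
        rw [Category.assoc, cd_comp]
        simp only [ci_cd]
        refine Eq.trans (Quotient.sound (qcong hS t _
          (fun _ => c.a (0 : M ⟶ cp M c.A)) (fun x => ?_))) ?_
        · exact Quotient.exact (Quotient.out_eq _)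
        · rw [a_zero_fam] }
  have hz : quotHom hS = z₀ := by
    rw [← cancel_epi e]
    apply Monad.Algebra.Hom.ext
    refine ConcreteCategory.hom_ext _ _ fun y => ?_
    show Quotient.mk _ (e.f y) = Quotient.mk _ (c.a (0 : M ⟶ cp M c.A))
    apply Quotient.sound
    show c.a _ ∈ _
    have he : c.a ((ci M (e.f y) - ci M (c.a (0 : M ⟶ cp M c.A)) : M ⟶ cp M c.A)) = e.f y := by
      conv_lhs => rw [← alg_unit c (e.f y)]
      rw [a_sub2, sub_zero, alg_unit]
    rw [he]
    exact ⟨y, rfl⟩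
  intro x
  have hx : (quotHom hS).f x = z₀.f x := by rw [hz]
  have hx2 : c.a ((ci M x - ci M (c.a (0 : M ⟶ cp M c.A)) : M ⟶ cp M c.A)) ∈ Set.range e.f :=
    Quotient.exact hx
  have hxe : c.a ((ci M x - ci M (c.a (0 : M ⟶ cp M c.A)) : M ⟶ cp M c.A)) = x := by
    conv_lhs => rw [← alg_unit c x]
    rw [a_sub2, sub_zero, alg_unit]
  rw [hxe] at hx2
  exact hx2

end EpiSurj

end Machinery2

section Machinery3

set_option linter.unusedSectionVars false
set_option maxHeartbeats 1000000

variable {A : Type u} [Category.{v} A] [HasColimits A] [Preadditive A] {M : A}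

section Free

lemma free_a {X : Type v} (t : M ⟶ cp M (M ⟶ cp M X)) :
    ((TM M).free.obj X).a t = t ≫ cd M (fun ψ : M ⟶ cp M X => ψ) := TM_μ M t

/-- The algebra morphism out of a free algebra determined by a family of elements. -/
noncomputable def freeDesc {X : Type v} {V : BCat M} (v : X → V.A) :
    (TM M).free.obj X ⟶ V where
  f := TypeCat.ofHom fun (t : M ⟶ cp M X) => V.a ((t ≫ cd M (fun x => ci M (v x)) : M ⟶ cp M V.A))
  h := by
    refine ConcreteCategory.hom_ext _ _ fun (Φ : M ⟶ cp M (M ⟶ cp M X)) => ?_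
    show V.a ((Φ ≫ cd M (fun t => ci M (V.a ((t ≫ cd M (fun x => ci M (v x)) : M ⟶ cp M V.A)))) : M ⟶ cp M V.A))
        = V.a (((((TM M).free.obj X).a Φ : M ⟶ cp M X) ≫ cd M fun x => ci M (v x) : M ⟶ cp M V.A))
    erw [free_a, Category.assoc, cd_comp]
    exact (rep V Φ (fun ψ => ψ ≫ cd M (fun x => ci M (v x)))).symm

lemma freeDesc_f {X : Type v} {V : BCat M} (v : X → V.A) (t : (TM M).obj X) :
    (freeDesc v).f t = V.a (((t : M ⟶ cp M X) ≫ cd M (fun x => ci M (v x)) : M ⟶ cp M V.A)) := rfl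

@[simp] lemma freeDesc_gen {X : Type v} {V : BCat M} (v : X → V.A) (x : X) :
    (freeDesc v).f (ci M x) = v x := by
  erw [freeDesc_f, ci_cd, alg_unit]

lemma free_hom_eq_freeDesc {X : Type v} {V : BCat M} (h : (TM M).free.obj X ⟶ V) :
    h = freeDesc (fun x => h.f (ci M x)) := by
  apply Monad.Algebra.Hom.ext
  refine ConcreteCategory.hom_ext _ _ fun (t : M ⟶ cp M X) => ?_
  have w := types_congr_hom h.h ((t ≫ cd M (fun x => ci M (ci M x))) : M ⟶ cp M (M ⟶ cp M X))
  change V.a ((((t ≫ cd M (fun x => ci M (ci M x))) : M ⟶ cp M (M ⟶ cp M X)) ≫ cd M (fun y : M ⟶ cp M X => ci M (h.f y)) : M ⟶ cp M V.A)) =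
    h.f (((TM M).free.obj X).a ((t ≫ cd M (fun x => ci M (ci M x))) : M ⟶ cp M (M ⟶ cp M X))) at w
  erw [free_a, Category.assoc, Category.assoc, cd_comp, cd_comp] at w
  simp only [ci_cd] at w
  rw [cd_ci] at w
  exact (w.trans (congrArg h.f (show t ≫ 𝟙 (cp M X) = t from Category.comp_id _))).symm

lemma free_hom_ext {X : Type v} {V : BCat M} {h₁ h₂ : (TM M).free.obj X ⟶ V}
    (w : ∀ x : X, h₁.f (ci M x) = h₂.f (ci M x)) : h₁ = h₂ := by
  rw [free_hom_eq_freeDesc h₁, free_hom_eq_freeDesc h₂,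
    show (fun x => h₁.f (ci M x)) = (fun x => h₂.f (ci M x)) from funext w]

lemma projective_free (X : Type v) : Projective ((TM M).free.obj X) := by
  constructor
  intro E Z f e he
  have hsurj : Function.Surjective e.f := surj_of_epi e
  choose g hg using fun x => hsurj (f.f (ci M x))
  refine ⟨freeDesc g, free_hom_ext (fun x => ?_)⟩
  show e.f ((freeDesc g).f (ci M x)) = f.f (ci M x)
  rw [freeDesc_gen, hg]

lemma projective_of_retract {P Q : BCat M} (s : P ⟶ Q) (r : Q ⟶ P) (hsr : s ≫ r = 𝟙 P)
    (hQ : Projective Q) : Projective P := by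
  constructor
  intro E Z f e he
  obtain ⟨g, hg⟩ := hQ.factors (r ≫ f) e
  exact ⟨s ≫ g, by rw [Category.assoc, hg, ← Category.assoc, hsr, Category.id_comp]⟩

/-- Pointwise difference of two algebra morphisms. -/
noncomputable def homSub {b z : BCat M} (p q : b ⟶ z) : b ⟶ z where
  f := TypeCat.ofHom fun x => z.a ((ci M (p.f x) - ci M (q.f x) : M ⟶ cp M z.A))
  h := by
    refine ConcreteCategory.hom_ext _ _ fun (t : M ⟶ cp M b.A) => ?_
    show z.a ((t ≫ cd M (fun x => ci M (z.a ((ci M (p.f x) - ci M (q.f x) : M ⟶ cp M z.A)))) : M ⟶ cp M z.A)) = z.a ((ci M (p.f (b.a t)) - ci M (q.f (b.a t)) : M ⟶ cp M z.A))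
    rw [hom_app p, hom_app q, a_sub2, ← Preadditive.comp_sub, cd_sub]
    exact (rep z t (fun y => ci M (p.f y) - ci M (q.f y))).symm

lemma homSub_f {b z : BCat M} (p q : b ⟶ z) (x : b.A) :
    (homSub p q).f x = z.a ((ci M (p.f x) - ci M (q.f x) : M ⟶ cp M z.A)) := rfl

lemma homSub_kill {b z V : BCat M} {p q : b ⟶ z} (H : z ⟶ V) (hH : p ≫ H = q ≫ H) :
    ∀ w ∈ Set.range (homSub p q).f, H.f w = V.a (0 : M ⟶ cp M V.A) := by
  rintro w ⟨g, rfl⟩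
  rw [homSub_f, hom_app H, Preadditive.sub_comp]
  simp only [ci_cd]
  have hg : H.f (p.f g) = H.f (q.f g) := types_congr_hom (congrArg Monad.Algebra.Hom.f hH) g
  rw [hg, sub_self]

lemma counit_surj (b : BCat M) : Function.Surjective ((TM M).adj.counit.app b).f := by
  intro x
  refine ⟨ci M x, ?_⟩
  show ((TM M).adj.counit.app b).f (ci M x) = x
  simp only [Monad.adj_counit]
  exact alg_unit b x

end Free

end Machinery3

section Machinery4

set_option linter.unusedSectionVars false
set_option maxHeartbeats 1000000

variable {A : Type u} [Category.{v} A] [HasColimits A] [Preadditive A] {M : A}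

section Colim

variable {J : Type v} [Category.{v} J] (K : J ⥤ BCat M)

/-- Index type for generators of the colimit. -/
abbrev KA : Type v := Σ j : J, (K.obj j).A

/-- Index type for relations of the colimit. -/
abbrev KG : Type v :=
  (Σ p : (Σ j j' : J, j ⟶ j'), (K.obj p.1).A) ⊕ (Σ j : J, (TM M).obj ((K.obj j).A))

/-- First relation family. -/
noncomputable def relv1 : KG K → (M ⟶ cp M (KA K))
  | Sum.inl ⟨⟨j, j', m⟩, x⟩ => ci M ⟨j', (K.map m).f x⟩
  | Sum.inr ⟨j, t⟩ => ci M ⟨j, (K.obj j).a t⟩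

/-- Second relation family. -/
noncomputable def relv2 : KG K → (M ⟶ cp M (KA K))
  | Sum.inl ⟨⟨j, _, _⟩, x⟩ => ci M ⟨j, x⟩
  | Sum.inr ⟨j, t⟩ => t ≫ cd M (fun x => ci M ⟨j, x⟩)

noncomputable def relu1 : (TM M).free.obj (KG K) ⟶ (TM M).free.obj (KA K) :=
  freeDesc (relv1 K)

noncomputable def relu2 : (TM M).free.obj (KG K) ⟶ (TM M).free.obj (KA K) :=
  freeDesc (relv2 K)

/-- The colimit algebra. -/
noncomputable def colimAlg : BCat M :=
  quotAlg (clos_range (homSub (relu1 K) (relu2 K)))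

/-- Projection from the free algebra onto the colimit algebra. -/
noncomputable def colimq : (TM M).free.obj (KA K) ⟶ colimAlg K :=
  quotHom _

lemma colimq_surj : Function.Surjective (colimq K).f := quot_surj _

lemma colim_rel (g : KG K) : (colimq K).f (relv1 K g) = (colimq K).f (relv2 K g) := by
  apply quot_rel'
  refine ⟨ci M g, ?_⟩
  erw [homSub_f]
  show ((TM M).free.obj (KA K)).a
      (ci M ((relu1 K).f (ci M g)) - ci M ((relu2 K).f (ci M g))) = _
  rw [show (relu1 K).f (ci M g) = relv1 K g from freeDesc_gen _ g,
    show (relu2 K).f (ci M g) = relv2 K g from freeDesc_gen _ g]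

/-- The morphism `colimq ∘ η` on carriers, as algebra morphism components. -/
noncomputable def colimInj (j : J) : K.obj j ⟶ colimAlg K where
  f := TypeCat.ofHom fun x => (colimq K).f (ci M ⟨j, x⟩)
  h := by
    refine ConcreteCategory.hom_ext _ _ fun (t : M ⟶ cp M (K.obj j).A) => ?_
    show (colimAlg K).a ((t ≫ cd M (fun x => ci M ((colimq K).f (ci M (⟨j, x⟩ : KA K)))) : M ⟶ cp M (colimAlg K).A))
        = (colimq K).f (ci M ⟨j, (K.obj j).a t⟩)
    have hq := types_congr_hom (colimq K).h ((t ≫ cd M (fun x => ci M (ci M (⟨j, x⟩ : KA K)))) : M ⟶ cp M (M ⟶ cp M (KA K)))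
    change (colimAlg K).a ((((t ≫ cd M (fun x => ci M (ci M (⟨j, x⟩ : KA K)))) : M ⟶ cp M (M ⟶ cp M (KA K))) ≫ cd M (fun y : M ⟶ cp M (KA K) => ci M ((colimq K).f y)) : M ⟶ cp M (colimAlg K).A)) =
      (colimq K).f (((TM M).free.obj (KA K)).a ((t ≫ cd M (fun x => ci M (ci M (⟨j, x⟩ : KA K)))) : M ⟶ cp M (M ⟶ cp M (KA K)))) at hq
    erw [free_a, Category.assoc, Category.assoc, cd_comp, cd_comp] at hq
    simp only [ci_cd] at hq
    have h2 : (colimq K).f ((t ≫ cd M (fun x => ci M (⟨j, x⟩ : KA K)) : M ⟶ cp M (KA K)))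
        = (colimq K).f (ci M (⟨j, (K.obj j).a t⟩ : KA K)) :=
      (colim_rel K (Sum.inr ⟨j, t⟩)).symm
    exact hq.trans h2

lemma colimInj_f (j : J) (x : (K.obj j).A) :
    (colimInj K j).f x = (colimq K).f (ci M ⟨j, x⟩) := rfl

/-- The colimit cocone. -/
noncomputable def colimCocone : Cocone K where
  pt := colimAlg K
  ι :=
    { app := fun j => colimInj K j
      naturality := fun j j' m => by
        simp only [Functor.const_obj_map, Functor.const_obj_obj, Category.comp_id]
        apply Monad.Algebra.Hom.ext
        refine ConcreteCategory.hom_ext _ _ fun x => ?_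
        show (colimInj K j').f ((K.map m).f x) = (colimInj K j).f x
        rw [colimInj_f, colimInj_f]
        exact colim_rel K (Sum.inl ⟨⟨j, j', m⟩, x⟩) }

section Desc

variable {K} (c : Cocone K)

noncomputable def colimDescFree : (TM M).free.obj (KA K) ⟶ c.pt :=
  freeDesc (fun p => (c.ι.app p.1).f p.2)

lemma colimDescFree_rel : relu1 K ≫ colimDescFree c = relu2 K ≫ colimDescFree c := by
  apply free_hom_ext
  intro g
  show (colimDescFree c).f ((relu1 K).f (ci M g))
      = (colimDescFree c).f ((relu2 K).f (ci M g))
  rw [show (relu1 K).f (ci M g) = relv1 K g from freeDesc_gen _ g,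
    show (relu2 K).f (ci M g) = relv2 K g from freeDesc_gen _ g]
  obtain (⟨⟨j, j', m⟩, x⟩ | ⟨j, t⟩) := g
  · show (colimDescFree c).f (ci M ⟨j', (K.map m).f x⟩)
        = (colimDescFree c).f (ci M ⟨j, x⟩)
    rw [show (colimDescFree c).f (ci M ⟨j', (K.map m).f x⟩)
        = (c.ι.app j').f ((K.map m).f x) from freeDesc_gen _ _,
      show (colimDescFree c).f (ci M (⟨j, x⟩ : KA K)) = (c.ι.app j).f x from
        freeDesc_gen _ _]
    have hn := c.ι.naturality m
    simp only [Functor.const_obj_map, Functor.const_obj_obj, Category.comp_id] at hn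
    exact types_congr_hom (congrArg Monad.Algebra.Hom.f hn) x
  · show (colimDescFree c).f (ci M ⟨j, (K.obj j).a t⟩)
        = (colimDescFree c).f (t ≫ cd M (fun x => ci M (⟨j, x⟩ : KA K)))
    rw [show (colimDescFree c).f (ci M ⟨j, (K.obj j).a t⟩)
        = (c.ι.app j).f ((K.obj j).a t) from freeDesc_gen _ _]
    erw [hom_app (c.ι.app j)]
    show _ = c.pt.a ((((t : M ⟶ cp M (K.obj j).A) ≫ cd M (fun x => ci M (⟨j, x⟩ : KA K))) ≫
      cd M (fun x => ci M ((c.ι.app x.1).f x.2)) : M ⟶ cp M c.pt.A))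
    erw [Category.assoc, cd_comp]
    simp only [ci_cd]
    rfl

/-- The descent morphism out of the colimit algebra. -/
noncomputable def colimDesc : colimAlg K ⟶ c.pt :=
  quotLift _ (colimDescFree c) (homSub_kill _ (colimDescFree_rel c))

lemma colimq_colimDesc : colimq K ≫ colimDesc c = colimDescFree c :=
  quotHom_quotLift _ _ _

/-- The colimit cocone is a colimit. -/
noncomputable def colimIsColimit : IsColimit (colimCocone K) where
  desc c := colimDesc c
  fac c j := by
    apply Monad.Algebra.Hom.ext
    refine ConcreteCategory.hom_ext _ _ fun x => ?_
    show (colimDesc c).f ((colimq K).f (ci M ⟨j, x⟩)) = (c.ι.app j).f x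
    have h1 := types_congr_hom (congrArg Monad.Algebra.Hom.f (colimq_colimDesc c)) (ci M ⟨j, x⟩)
    simp only [Monad.Algebra.comp_f, types_comp_apply] at h1
    erw [h1]
    exact freeDesc_gen _ _
  uniq c m hm := by
    apply hom_ext_of_surj (colimq_surj K)
    rw [colimq_colimDesc]
    apply free_hom_ext
    intro p
    show m.f ((colimq K).f (ci M p)) = (colimDescFree c).f (ci M p)
    rw [show (colimDescFree c).f (ci M p) = (c.ι.app p.1).f p.2 from freeDesc_gen _ _]
    rw [← hm p.1]
    rfl

end Desc

instance hasColimitsB : HasColimitsOfSize.{v, v} (BCat M) :=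
  ⟨fun _ _ => ⟨fun K => HasColimit.mk ⟨colimCocone K, colimIsColimit⟩⟩⟩

end Colim

end Machinery4

section Machinery5

set_option linter.unusedSectionVars false
set_option maxHeartbeats 1000000

universe w' w

variable {A : Type u} [Category.{v} A] [HasColimits A] [Preadditive A] {M : A}

lemma Psi_a (N : A) (Φ : M ⟶ cp M (M ⟶ N)) :
    ((PsiM M).obj N).a Φ = Φ ≫ cd M (fun ψ : M ⟶ N => ψ) := by
  simp only [PsiM, Monad.comparison_obj_a, copowerAdj]
  simp [Adjunction.mkOfHomEquiv_counit_app]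
  rfl

lemma Psi_map_f {N N' : A} (k : N ⟶ N') (t : M ⟶ N) : ((PsiM M).map k).f t = t ≫ k := rfl

lemma psiFreeEq (X : Type v) : (PsiM M).obj (cp M X) = (TM M).free.obj X := rfl

lemma psi_full_copower {X : Type v} {N' : A}
    (φ : (PsiM M).obj (cp M X) ⟶ (PsiM M).obj N') :
    ∃ k : cp M X ⟶ N', (PsiM M).map k = φ := by
  refine ⟨cd M (fun x => φ.f (ci M x)), ?_⟩
  apply Monad.Algebra.Hom.ext
  refine ConcreteCategory.hom_ext _ _ fun (t : M ⟶ cp M X) => ?_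
  show t ≫ cd M (fun x => φ.f (ci M x)) = φ.f t
  have w := types_congr_hom φ.h ((t ≫ cd M (fun x => ci M (ci M x))) : M ⟶ cp M (M ⟶ cp M X))
  change ((PsiM M).obj N').a ((((t ≫ cd M (fun x => ci M (ci M x))) : M ⟶ cp M (M ⟶ cp M X)) ≫ cd M (fun y : M ⟶ cp M X => ci (X := M ⟶ N') M (φ.f y)) : M ⟶ cp M (M ⟶ N'))) =
    φ.f (((PsiM M).obj (cp M X)).a ((t ≫ cd M (fun x => ci M (ci M x))) : M ⟶ cp M (M ⟶ cp M X))) at w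
  erw [Psi_a, Psi_a, Category.assoc, Category.assoc, Category.assoc,
    cd_comp, cd_comp, cd_comp] at w
  simp only [ci_cd] at w
  rw [cd_ci] at w
  have e : (fun x => φ.f (ci M x)) = fun x => ci M (φ.f (ci M x) : M ⟶ N') ≫ cd M (fun ψ : M ⟶ N' => ψ) :=
    funext fun x => (ci_cd M (fun ψ : M ⟶ N' => ψ) _).symm
  exact (congrArg (fun g => t ≫ cd M g) e).trans
    (w.trans (congrArg φ.f (show t ≫ 𝟙 (cp M X) = t from Category.comp_id _)))

lemma psi_faithful_copower {X : Type v} {N' : A} {k₁ k₂ : cp M X ⟶ N'}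
    (h : (PsiM M).map k₁ = (PsiM M).map k₂) : k₁ = k₂ := by
  apply Sigma.hom_ext
  intro x
  exact types_congr_hom (congrArg Monad.Algebra.Hom.f h) (ci M x)

lemma psi_full_add {N N' : A} (hN : AddClass M N) (φ : (PsiM M).obj N ⟶ (PsiM M).obj N') :
    ∃ k : N ⟶ N', (PsiM M).map k = φ := by
  obtain ⟨X, s, r, hsr⟩ := hN
  obtain ⟨k, hk⟩ := psi_full_copower ((PsiM M).map r ≫ φ)
  refine ⟨s ≫ k, ?_⟩
  rw [Functor.map_comp, hk, ← Category.assoc, ← Functor.map_comp, hsr,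
    CategoryTheory.Functor.map_id, Category.id_comp]

lemma psi_faithful_add {N N' : A} (hN : AddClass M N) {k₁ k₂ : N ⟶ N'}
    (h : (PsiM M).map k₁ = (PsiM M).map k₂) : k₁ = k₂ := by
  obtain ⟨X, s, r, hsr⟩ := hN
  have h2 : r ≫ k₁ = r ≫ k₂ :=
    psi_faithful_copower (by rw [Functor.map_comp, Functor.map_comp, h])
  calc k₁ = (s ≫ r) ≫ k₁ := by rw [hsr, Category.id_comp]
  _ = s ≫ r ≫ k₂ := by rw [Category.assoc, h2]
  _ = k₂ := by rw [← Category.assoc, hsr, Category.id_comp]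

lemma projective_psi_add {N : A} (hN : AddClass M N) : Projective ((PsiM M).obj N) := by
  obtain ⟨X, s, r, hsr⟩ := hN
  have hfree : Projective ((PsiM M).obj (cp M X)) := projective_free X
  exact projective_of_retract ((PsiM M).map s) ((PsiM M).map r)
    (by rw [← Functor.map_comp, hsr, CategoryTheory.Functor.map_id]) hfree

lemma addClass_of_iso {N N' : A} (e : N ≅ N') (h : AddClass M N') : AddClass M N := by
  obtain ⟨X, s, r, hsr⟩ := h
  exact ⟨X, e.hom ≫ s, r ≫ e.inv, by
    rw [Category.assoc, ← Category.assoc s, hsr, Category.id_comp, Iso.hom_inv_id]⟩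

/-- The core argument: if the colimit of `D ⋙ Ψ` in `B` is projective, then the colimit
of `D` in `A` lies in `Add M`, provided all objects of `D` do. -/
lemma core {J : Type w} [Category.{w'} J] [HasColimitsOfShape J (BCat M)]
    (D : J ⥤ A) (c : Cocone D) (hc : IsColimit c)
    (hAdd : ∀ j, AddClass M (D.obj j))
    (hproj : Projective (colimit (D ⋙ PsiM M))) : AddClass M c.pt := by
  let E := D ⋙ PsiM M
  let b : BCat M := colimit E
  let rr : (TM M).free.obj b.A ⟶ b := (TM M).adj.counit.app b
  haveI hepi : Epi rr := epi_of_surj _ (counit_surj b)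
  obtain ⟨ss, hss⟩ := hproj.factors (𝟙 b) rr
  let u : b ⟶ (PsiM M).obj c.pt := colimit.desc E ((PsiM M).mapCocone c)
  let ρ : cp M b.A ⟶ c.pt := cd M (fun y => u.f y)
  have hkey : rr ≫ u = (PsiM M).map ρ := by
    apply free_hom_ext
    intro y
    show u.f (rr.f (ci M y)) = ((PsiM M).map ρ).f (ci M y)
    have h1 : rr.f (ci M y) = y := by
      show ((TM M).adj.counit.app b).f (ci M y) = y
      simp only [Monad.adj_counit]
      exact alg_unit b y
    rw [h1]
    show u.f y = ci M y ≫ ρ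
    erw [ci_cd]
  have hv : ∀ j, ∃ vj : D.obj j ⟶ cp M b.A,
      (PsiM M).map vj = colimit.ι E j ≫ ss :=
    fun j => psi_full_add (hAdd j) (colimit.ι E j ≫ ss)
  choose v hvs using hv
  let vc : Cocone D :=
    { pt := cp M b.A
      ι :=
        { app := v
          naturality := fun j j' m => by
            simp only [Functor.const_obj_map, Functor.const_obj_obj, Category.comp_id]
            apply psi_faithful_add (hAdd j)
            erw [Functor.map_comp, hvs j', hvs j, ← Category.assoc]
            rw [show (PsiM M).map (D.map m) = E.map m from rfl, colimit.w]
            rfl } }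
  let ς : c.pt ⟶ cp M b.A := hc.desc vc
  have hvρ : ∀ j, v j ≫ ρ = c.ι.app j := by
    intro j
    apply psi_faithful_add (hAdd j)
    erw [Functor.map_comp, hvs j, Category.assoc, ← hkey, ← Category.assoc ss rr u,
      hss, Category.id_comp, colimit.ι_desc]
    rfl
  refine ⟨b.A, ς, ρ, hc.hom_ext (fun j => ?_)⟩
  rw [← Category.assoc, hc.fac vc j, hvρ j]
  exact (Category.comp_id _).symm

end Machinery5

section Machinery6

set_option linter.unusedSectionVars false
set_option maxHeartbeats 1000000

variable {A : Type u} [Category.{v} A] [HasColimits A] [Preadditive A] {M : A}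

lemma addClass_self : AddClass M M :=
  ⟨PUnit, ci M PUnit.unit, cd M (fun _ => 𝟙 M), by simp⟩

/-- The isomorphism `M^{(PUnit)} ≅ M`. -/
noncomputable def cpPUnitIso : cp M PUnit ≅ M where
  hom := cd M (fun _ => 𝟙 M)
  inv := ci M PUnit.unit
  hom_inv_id := by
    apply Sigma.hom_ext
    intro x
    simp
  inv_hom_id := by simp

end Machinery6


namespace Stmt6

variable {A : Type u} [Category.{v} A] [HasColimits A] [Preadditive A]

/-- Let `A` be a cocomplete additive category, `M ∈ A`, and
`B = T_M-Mod` the related abelian category. If the class of projective objects of `B` is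
closed under arbitrary (resp. countable) direct limits, then `Add(M)` is closed under
arbitrary (resp. countable) direct limits in `A`; and if every countable direct limit of
copies of the projective generator `P = T_M(*)` is projective in `B`, then every countable
direct limit of copies of `M` in `A` belongs to `Add(M)`. -/
theorem projectives_closed_implies_AddM_closed (M : A) :
    (ClosedUnderDirectLimits (fun b : BCat M => Projective b) →
      ClosedUnderDirectLimits (AddClass M)) ∧
    (ClosedUnderCountableDirectLimits (fun b : BCat M => Projective b) →
      ClosedUnderCountableDirectLimits (AddClass M)) ∧
    ((∀ (g : ℕ → (PGen M ⟶ PGen M)) (c : Cocone (seqDiagram (PGen M) g)), IsColimit c →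
        Projective c.pt) →
      ∀ (f : ℕ → (M ⟶ M)) (c : Cocone (seqDiagram M f)), IsColimit c →
        AddClass M c.pt) := by
  refine ⟨?_, ?_, ?_⟩
  · intro hyp Θ po hdir hne D c hc hAdd
    exact core D c hc hAdd
      (hyp Θ po hdir hne (D ⋙ PsiM M) (colimit.cocone _) (colimit.isColimit _)
        (fun θ => projective_psi_add (hAdd θ)))
  · intro hyp Θ po hcnt hdir hne D c hc hAdd
    exact core D c hc hAdd
      (hyp Θ po hcnt hdir hne (D ⋙ PsiM M) (colimit.cocone _) (colimit.isColimit _)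
        (fun θ => projective_psi_add (hAdd θ)))
  · intro hyp f c hc
    haveI : HasColimitsOfSize.{0, 0} (BCat M) := hasColimitsOfSizeShrink.{0, 0, v, v} (BCat M)
    let E := seqDiagram M f ⋙ PsiM M
    let iso0 : PGen M ≅ (PsiM M).obj M := (PsiM M).mapIso (cpPUnitIso (M := M))
    let g : ℕ → (PGen M ⟶ PGen M) := fun n => iso0.hom ≫ (PsiM M).map (f n) ≫ iso0.inv
    let τ : seqDiagram (PGen M) g ⟶ E :=
      NatTrans.ofSequence (F := seqDiagram (PGen M) g) (G := E) (fun n => iso0.hom)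
        (fun n => by
          rw [show (seqDiagram (PGen M) g).map (homOfLE (Nat.le_add_right n 1)) = g n from
            Functor.ofSequence_map_homOfLE_succ _ n]
          rw [show E.map (homOfLE (Nat.le_add_right n 1)) = (PsiM M).map (f n) from
            congrArg (PsiM M).map (Functor.ofSequence_map_homOfLE_succ f n)]
          show (iso0.hom ≫ (PsiM M).map (f n) ≫ iso0.inv) ≫ iso0.hom = _
          rw [Category.assoc, Category.assoc, Iso.inv_hom_id, Category.comp_id]
          rfl)
    haveI hτ : ∀ n : ℕ, IsIso (τ.app n) := fun n => by
      show IsIso (iso0.hom)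
      infer_instance
    haveI : IsIso τ := NatIso.isIso_of_isIso_app τ
    let c2 : Cocone (seqDiagram (PGen M) g) :=
      (Cocone.precompose ((asIso τ).hom)).obj (colimit.cocone E)
    have hc2 : IsColimit c2 :=
      (IsColimit.precomposeHomEquiv (asIso τ) (colimit.cocone E)).symm (colimit.isColimit E)
    have hproj : Projective (colimit E) := hyp g c2 hc2
    exact core (seqDiagram M f) c hc (fun n => addClass_self) hproj

end Stmt6

end EnochsPaper
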